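/- Second derivative test for exponential integrals: if F : [a,b] → ℝ is twice differentiable with F''(x) ≥ r > 0 (or F''(x) ≤ -r < 0) on [a,b], and G : [a,b] → ℝ satisfies |G(x)| ≤ M with G/F' monotonic, then |∫_a^b G(x) e^{iF(x)} dx| ≤ 8M/√r. -/

import Mathlib

open Set

open MeasureTheory Filter Topology Function

lemma vdc_key (c d K : ℝ) (hcd : c ≤ d) (F F' : ℝ → ℝ)
    (hF : Continuous F) (hF' : Continuous F')
    (hFd : ∀ x ∈ Ioo c d, HasDerivAt F (F' x) x)
    (h : ℝ → ℝ) (hh : Monotone h) (hK : ∀ x, |h x| ≤ K) :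
    ‖∫ x in c..d, ((h x : ℂ) * (F' x : ℂ)) * Complex.exp (Complex.I * (F x : ℂ))‖
      ≤ 4 * K := by
  have hK0 : 0 ≤ K := (abs_nonneg _).trans (hK 0)
  -- the antiderivative w and the integrand w'
  set w : ℝ → ℂ := fun x => -Complex.I * Complex.exp (Complex.I * (F x : ℂ)) with hw
  set w' : ℝ → ℂ := fun x => (F' x : ℂ) * Complex.exp (Complex.I * (F x : ℂ)) with hw'
  have hwc : Continuous w :=
    continuous_const.mul (Complex.continuous_exp.comp
      (continuous_const.mul (Complex.continuous_ofReal.comp hF)))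
  have hw'c : Continuous w' :=
    (Complex.continuous_ofReal.comp hF').mul (Complex.continuous_exp.comp
      (continuous_const.mul (Complex.continuous_ofReal.comp hF)))
  have hwnorm : ∀ x, ‖w x‖ = 1 := by
    intro x
    simp [hw, Complex.norm_exp]
  have hwd : ∀ x ∈ Ioo c d, HasDerivAt w (w' x) x := by
    intro x hx
    have h1 : HasDerivAt (fun y => Complex.I * (F y : ℂ)) (Complex.I * (F' x : ℂ)) x :=
      ((hFd x hx).ofReal_comp).const_mul Complex.I
    have h2 := (h1.cexp).const_mul (-Complex.I)
    convert h2 using 1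
    · rfl
    simp only [hw']
    ring_nf
    simp [Complex.I_sq]
  have hFTC : ∀ u v : ℝ, c ≤ u → u ≤ v → v ≤ d →
      ∫ x in u..v, w' x = w v - w u := by
    intro u v hu huv hv
    refine intervalIntegral.integral_eq_sub_of_hasDeriv_right_of_le huv
      hwc.continuousOn (fun x hx => (hwd x ⟨lt_of_le_of_lt hu hx.1,
        lt_of_lt_of_le hx.2 hv⟩).hasDerivWithinAt) (hw'c.intervalIntegrable u v)
  -- Stieltjes function: the right-continuous version of h
  set s := hh.stieltjesFunction with hsdef
  have hse : ∀ x, s x = Function.rightLim h x := fun x => hh.stieltjesFunction_eq x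
  have hhs : ∀ x, h x ≤ s x := fun x => (hse x) ▸ hh.le_rightLim le_rfl
  have hsh : ∀ x y : ℝ, x < y → s x ≤ h y := fun x y hxy => (hse x) ▸ hh.rightLim_le hxy
  have hsK : ∀ x, |s x| ≤ K := by
    intro x
    rw [abs_le]
    refine ⟨(abs_le.mp (hK x)).1.trans (hhs x), ?_⟩
    exact (hsh x (x + 1) (lt_add_one x)).trans (abs_le.mp (hK (x + 1))).2
  set μ := s.measure with hμdef
  set ν := μ.restrict (Ioc c d) with hνdef
  have hν_univ : (ν univ).toReal = s d - s c := by
    rw [hνdef, Measure.restrict_apply_univ, hμdef, StieltjesFunction.measure_Ioc,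
      ENNReal.toReal_ofReal (sub_nonneg.2 (s.mono hcd))]
  haveI : IsFiniteMeasure ν := by
    constructor
    rw [hνdef, Measure.restrict_apply_univ, hμdef, StieltjesFunction.measure_Ioc]
    exact ENNReal.ofReal_lt_top
  have hsx : ∀ x ∈ Ioc c d, (ν (Iic x)).toReal = s x - s c := by
    intro x hx
    rw [hνdef, Measure.restrict_apply measurableSet_Iic]
    have hIic : Iic x ∩ Ioc c d = Ioc c x := by
      ext y
      simp only [mem_inter_iff, mem_Iic, mem_Ioc]
      exact ⟨fun ⟨h1, h2, _⟩ => ⟨h2, h1⟩, fun ⟨h1, h2⟩ => ⟨h2, h1, h2.trans hx.2⟩⟩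
    rw [hIic, hμdef, StieltjesFunction.measure_Ioc,
      ENNReal.toReal_ofReal (sub_nonneg.2 (s.mono hx.1.le))]
  have haes : ∀ᵐ x ∂(volume : Measure ℝ), h x = s x := by
    have hcnt : Set.Countable {x | ¬ContinuousAt h x} := hh.countable_not_continuousAt
    have h0 : (volume : Measure ℝ) {x | ¬ContinuousAt h x} = 0 := hcnt.measure_zero _
    filter_upwards [measure_eq_zero_iff_ae_notMem.mp h0] with x hx
    simp only [mem_setOf_eq, not_not] at hx
    rw [hse]
    exact (rightLim_eq_of_tendsto
      (hx.tendsto.mono_left nhdsWithin_le_nhds)).symm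
  set f : ℝ → ℝ → ℂ := fun x t => if t ≤ x then w' x else 0 with hfdef
  obtain ⟨C, hCb⟩ := (isCompact_Icc : IsCompact (Icc c d)).exists_bound_of_continuousOn
    hw'c.continuousOn
  have I1 : Integrable w' (volume.restrict (Ioc c d)) := hw'c.integrableOn_Ioc
  have I2 : Integrable (fun x => ((s x - s c : ℝ) : ℂ) * w' x) (volume.restrict (Ioc c d)) := by
    refine (integrable_const ((2 * K) * max C 0)).mono'
      (((Complex.measurable_ofReal.comp
        ((s.mono.measurable.sub measurable_const))).aestronglyMeasurable).mul
        hw'c.aestronglyMeasurable) ?_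
    filter_upwards [ae_restrict_mem measurableSet_Ioc] with x hx
    rw [norm_mul, Complex.norm_real]
    have h1 : ‖s x - s c‖ ≤ 2 * K := by
      rw [Real.norm_eq_abs]
      calc |s x - s c| ≤ |s x| + |s c| := abs_sub _ _
        _ ≤ K + K := add_le_add (hsK x) (hsK c)
        _ = 2 * K := by ring
    exact mul_le_mul h1 ((hCb x ⟨hx.1.le, hx.2⟩).trans (le_max_left _ _))
      (norm_nonneg _) (by positivity)
  have hcongr : (∫ x in c..d, (h x : ℂ) * (F' x : ℂ) * Complex.exp (Complex.I * (F x : ℂ)))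
      = ∫ x in Ioc c d, (s x : ℂ) * w' x := by
    rw [intervalIntegral.integral_of_le hcd]
    apply integral_congr_ae
    filter_upwards [ae_restrict_of_ae haes] with x hx
    rw [hx, hw']
    ring
  have hsplit : (∫ x in Ioc c d, (s x : ℂ) * w' x) =
      (s c : ℂ) * (w d - w c) + ∫ x in Ioc c d, ((s x - s c : ℝ) : ℂ) * w' x := by
    have heq : ∀ x ∈ Ioc c d, (s x : ℂ) * w' x
        = (s c : ℂ) * w' x + ((s x - s c : ℝ) : ℂ) * w' x := by
      intro x hx
      push_cast
      ring
    rw [setIntegral_congr_fun measurableSet_Ioc heq, integral_add (I1.const_mul _) I2,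
      integral_const_mul, ← intervalIntegral.integral_of_le hcd, hFTC c d le_rfl hcd le_rfl]
  -- Fubini
  have hfint : Integrable (Function.uncurry f) ((volume.restrict (Ioc c d)).prod ν) := by
    have hmeas : StronglyMeasurable (Function.uncurry f) := by
      have huf : Function.uncurry f = Set.indicator {p : ℝ × ℝ | p.2 ≤ p.1}
          (fun p => w' p.1) := by
        funext p
        by_cases hp : p.2 ≤ p.1 <;>
          simp [Function.uncurry, hfdef, hp, Set.indicator_apply, mem_setOf_eq]
      rw [huf]
      exact ((hw'c.comp continuous_fst).stronglyMeasurable).indicator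
        (isClosed_le continuous_snd continuous_fst).measurableSet
    refine (integrable_const (max C 0)).mono' hmeas.aestronglyMeasurable ?_
    rw [hνdef, Measure.prod_restrict]
    filter_upwards [ae_restrict_mem (measurableSet_Ioc.prod measurableSet_Ioc)] with p hp
    by_cases hple : p.2 ≤ p.1
    · simp only [Function.uncurry, hfdef, if_pos hple]
      exact (hCb p.1 ⟨hp.1.1.le, hp.1.2⟩).trans (le_max_left _ _)
    · simp only [Function.uncurry, hfdef, if_neg hple, norm_zero]
      exact le_max_right _ _
  have hT1 : (∫ x in Ioc c d, ((s x - s c : ℝ) : ℂ) * w' x)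
      = ∫ x in Ioc c d, (∫ t, f x t ∂ν) ∂volume := by
    refine setIntegral_congr_fun measurableSet_Ioc (fun x hx => ?_)
    have h1 : (fun t => f x t) = (Iic x).indicator (fun _ => w' x) := by
      funext t
      by_cases ht : t ≤ x <;> simp [hfdef, ht, Set.indicator_apply, mem_Iic]
    rw [h1, integral_indicator_const _ measurableSet_Iic, measureReal_def, hsx x hx, Complex.real_smul]
  have hswap : (∫ x in Ioc c d, (∫ t, f x t ∂ν) ∂volume) = ∫ t, (∫ x, f x t
      ∂(volume.restrict (Ioc c d))) ∂ν := integral_integral_swap hfint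
  have hinner : (∫ t, (∫ x, f x t ∂(volume.restrict (Ioc c d))) ∂ν)
      = ∫ t, (w d - w t) ∂ν := by
    refine integral_congr_ae ?_
    filter_upwards [ae_restrict_mem measurableSet_Ioc] with t ht
    have h1 : (fun x => f x t) = (Ici t).indicator w' := by
      funext x
      by_cases hx : t ≤ x <;> simp [hfdef, hx, Set.indicator_apply, mem_Ici]
    rw [h1, integral_indicator measurableSet_Ici, Measure.restrict_restrict measurableSet_Ici]
    have h2 : Ici t ∩ Ioc c d = Icc t d := by
      ext y
      simp only [mem_inter_iff, mem_Ici, mem_Ioc, mem_Icc]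
      exact ⟨fun ⟨a1, _, a3⟩ => ⟨a1, a3⟩, fun ⟨a1, a2⟩ => ⟨a1, ht.1.trans_le a1, a2⟩⟩
    rw [h2, integral_Icc_eq_integral_Ioc, ← intervalIntegral.integral_of_le ht.2,
      hFTC t d ht.1.le ht.2 le_rfl]
  have hwint : Integrable w ν := by
    refine (integrable_const (1 : ℝ)).mono' hwc.aestronglyMeasurable ?_
    filter_upwards with t
    rw [hwnorm t]
  have hT4 : (∫ t, (w d - w t) ∂ν) = ((s d - s c : ℝ) : ℂ) * w d - ∫ t, w t ∂ν := by
    rw [integral_sub (integrable_const _) hwint, integral_const, measureReal_def, ← hν_univ, Complex.real_smul]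
  rw [hcongr, hsplit, hT1, hswap, hinner, hT4]
  have hIeq : (s c : ℂ) * (w d - w c) + (((s d - s c : ℝ) : ℂ) * w d - ∫ t, w t ∂ν)
      = ((s d : ℂ) * w d - (s c : ℂ) * w c) - ∫ t, w t ∂ν := by
    push_cast
    ring
  rw [hIeq]
  have hbw : ‖∫ t, w t ∂ν‖ ≤ s d - s c := by
    refine (norm_integral_le_integral_norm w).trans ?_
    have : (∫ t, ‖w t‖ ∂ν) = ∫ _t, (1 : ℝ) ∂ν := by
      refine integral_congr_ae ?_
      filter_upwards with t
      rw [hwnorm t]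
    rw [this, integral_const, smul_eq_mul, mul_one, measureReal_def, hν_univ]
  calc ‖((s d : ℂ) * w d - (s c : ℂ) * w c) - ∫ t, w t ∂ν‖
      ≤ ‖(s d : ℂ) * w d - (s c : ℂ) * w c‖ + ‖∫ t, w t ∂ν‖ := norm_sub_le _ _
    _ ≤ (‖(s d : ℂ) * w d‖ + ‖(s c : ℂ) * w c‖) + (s d - s c) :=
        add_le_add (norm_sub_le _ _) hbw
    _ ≤ (K * 1 + K * 1) + (K + K) := by
        refine add_le_add (add_le_add ?_ ?_) ?_
        · rw [norm_mul, Complex.norm_real, hwnorm, Real.norm_eq_abs]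
          exact mul_le_mul_of_nonneg_right (hsK d) zero_le_one
        · rw [norm_mul, Complex.norm_real, hwnorm, Real.norm_eq_abs]
          exact mul_le_mul_of_nonneg_right (hsK c) zero_le_one
        · have := abs_le.mp (hsK d)
          have := abs_le.mp (hsK c)
          linarith [abs_le.mp (hsK d), abs_le.mp (hsK c)]
    _ = 4 * K := by ring

lemma vdc_core (a b r M : ℝ) (hab : a ≤ b) (hr : 0 < r) (F F' F'' G : ℝ → ℝ)
    (hderiv : ∀ x ∈ Icc a b, HasDerivAt F (F' x) x)
    (hderiv' : ∀ x ∈ Icc a b, HasDerivAt F' (F'' x) x)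
    (hbound : ∀ x ∈ Icc a b, r ≤ F'' x)
    (hG : ∀ x ∈ Icc a b, |G x| ≤ M)
    (hmono : MonotoneOn (fun x => G x / F' x) (Icc a b)) :
    ‖∫ x in a..b, (G x : ℂ) * Complex.exp (Complex.I * (F x : ℂ))‖
      ≤ 8 * M / Real.sqrt r := by
  have hM : 0 ≤ M := (abs_nonneg _).trans (hG a ⟨le_rfl, hab⟩)
  have hsr : 0 < Real.sqrt r := Real.sqrt_pos.mpr hr
  have hss : Real.sqrt r * Real.sqrt r = r := Real.mul_self_sqrt hr.le
  set δ : ℝ := 2 / Real.sqrt r with hδdef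
  have hδ : 0 < δ := by positivity
  have hrδ : r * δ = 2 * Real.sqrt r := by
    rw [hδdef]
    field_simp
    nlinarith [hss]
  set K : ℝ := M / (r * δ) with hKdef
  have hrδpos : 0 < r * δ := by positivity
  have hK0 : 0 ≤ K := by positivity
  -- clamp to [a,b]
  set cl : ℝ → ℝ := fun x => max a (min x b) with hcl
  have hclmono : Monotone cl := fun x y hxy => max_le_max le_rfl (min_le_min hxy le_rfl)
  have hclmem : ∀ x, cl x ∈ Icc a b := fun x => ⟨le_max_left _ _, max_le hab (min_le_right _ _)⟩
  have hclid : ∀ x ∈ Icc a b, cl x = x := by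
    intro x hx
    rw [hcl]
    dsimp only
    rw [min_eq_left hx.2, max_eq_right hx.1]
  have hFcont : ContinuousOn F (Icc a b) :=
    fun x hx => (hderiv x hx).continuousAt.continuousWithinAt
  have hF'cont : ContinuousOn F' (Icc a b) :=
    fun x hx => (hderiv' x hx).continuousAt.continuousWithinAt
  have hclc : Continuous cl := continuous_const.max (continuous_id.min continuous_const)
  have hFc : Continuous (F ∘ cl) := hFcont.comp_continuous hclc hclmem
  have hF'c : Continuous (F' ∘ cl) := hF'cont.comp_continuous hclc hclmem
  -- growth of F'
  have hgrow : ∀ x ∈ Icc a b, ∀ y ∈ Icc a b, x ≤ y → r * (y - x) ≤ F' y - F' x := by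
    intro x hx y hy hxy
    have hmg : MonotoneOn (fun z => F' z - r * z) (Icc a b) := by
      apply monotoneOn_of_deriv_nonneg (convex_Icc a b)
      · exact hF'cont.sub (continuous_const.mul continuous_id).continuousOn
      · intro z hz
        rw [interior_Icc] at hz
        exact (((hderiv' z (Ioo_subset_Icc_self hz)).sub
          ((hasDerivAt_id z).const_mul r)).differentiableAt).differentiableWithinAt
      · intro z hz
        rw [interior_Icc] at hz
        have hd : HasDerivAt (fun z => F' z - r * z) (F'' z - r * 1) z :=
          (hderiv' z (Ioo_subset_Icc_self hz)).sub ((hasDerivAt_id z).const_mul r)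
        rw [hd.deriv]
        have := hbound z (Ioo_subset_Icc_self hz)
        linarith
    have := hmg hx hy hxy
    dsimp only at this
    linarith
  -- choose the critical point
  obtain ⟨x₀, hx₀, hpos, hneg⟩ : ∃ x₀ ∈ Icc a b,
      (∀ x ∈ Icc a b, x₀ + δ ≤ x → r * δ ≤ F' x) ∧
      (∀ x ∈ Icc a b, x ≤ x₀ - δ → F' x ≤ -(r * δ)) := by
    by_cases ha0 : 0 ≤ F' a
    · refine ⟨a, ⟨le_rfl, hab⟩, fun x hx hxx => ?_, fun x hx hxx => ?_⟩
      · have h1 := hgrow a ⟨le_rfl, hab⟩ x hx hx.1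
        have h2 : r * δ ≤ r * (x - a) := mul_le_mul_of_nonneg_left (by linarith) hr.le
        linarith
      · linarith [hx.1, hδ]
    · by_cases hb0 : F' b ≤ 0
      · refine ⟨b, ⟨hab, le_rfl⟩, fun x hx hxx => ?_, fun x hx hxx => ?_⟩
        · linarith [hx.2, hδ]
        · have h1 := hgrow x hx b ⟨hab, le_rfl⟩ hx.2
          have h2 : r * δ ≤ r * (b - x) := mul_le_mul_of_nonneg_left (by linarith) hr.le
          linarith
      · push_neg at ha0 hb0
        obtain ⟨x₀, hx₀, h0⟩ := intermediate_value_Icc hab hF'cont ⟨ha0.le, hb0.le⟩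
        refine ⟨x₀, hx₀, fun x hx hxx => ?_, fun x hx hxx => ?_⟩
        · have h1 := hgrow x₀ hx₀ x hx (by linarith)
          have h2 : r * δ ≤ r * (x - x₀) := mul_le_mul_of_nonneg_left (by linarith) hr.le
          rw [h0] at h1
          linarith
        · have h1 := hgrow x hx x₀ hx₀ (by linarith)
          have h2 : r * δ ≤ r * (x₀ - x) := mul_le_mul_of_nonneg_left (by linarith) hr.le
          rw [h0] at h1
          linarith
  set p : ℝ := max a (x₀ - δ) with hpdef
  set q : ℝ := min b (x₀ + δ) with hqdef
  have hap : a ≤ p := le_max_left _ _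
  have hpb : p ≤ b := max_le hab (by linarith [hx₀.2])
  have haq : a ≤ q := le_min hab (by linarith [hx₀.1])
  have hqb : q ≤ b := min_le_left _ _
  have hpq : p ≤ q := max_le (le_min hab (by linarith [hx₀.1]))
    (le_min (by linarith [hx₀.2]) (by linarith))
  have hqp : q - p ≤ 2 * δ := by
    have h1 : x₀ - δ ≤ p := le_max_right _ _
    have h2 : q ≤ x₀ + δ := min_le_right _ _
    linarith
  -- the measurable bounded version of the integrand
  set Φ : ℝ → ℂ := fun x => ((G (cl x) / F' (cl x) : ℝ) : ℂ) * ((F' (cl x) : ℝ) : ℂ) *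
    Complex.exp (Complex.I * ((F (cl x) : ℝ) : ℂ)) with hΦdef
  have hΦnorm : ∀ x, ‖Φ x‖ ≤ M := by
    intro x
    rw [hΦdef]
    dsimp only
    rw [norm_mul, norm_mul, Complex.norm_real, Complex.norm_real]
    have hexp : ‖Complex.exp (Complex.I * ((F (cl x) : ℝ) : ℂ))‖ = 1 := by
      simp [Complex.norm_exp]
    rw [hexp, mul_one]
    by_cases h0 : F' (cl x) = 0
    · simp only [h0, div_zero, norm_zero, zero_mul]
      exact hM
    · rw [Real.norm_eq_abs, Real.norm_eq_abs, abs_div,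
        div_mul_cancel₀ _ (abs_ne_zero.mpr h0)]
      exact hG _ (hclmem x)
  have hhclmono : Monotone (fun x => G (cl x) / F' (cl x)) :=
    fun x y hxy => hmono (hclmem x) (hclmem y) (hclmono hxy)
  have hΦmeas : ∀ u v : ℝ, AEStronglyMeasurable Φ (volume.restrict (Set.uIoc u v)) := by
    intro u v
    exact (((Complex.measurable_ofReal.comp hhclmono.measurable).aestronglyMeasurable).mul
      (Complex.continuous_ofReal.comp hF'c).aestronglyMeasurable).mul
      (Complex.continuous_exp.comp
        (continuous_const.mul (Complex.continuous_ofReal.comp hFc))).aestronglyMeasurable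
  have hΦint : ∀ u v : ℝ, IntervalIntegrable Φ volume u v := by
    intro u v
    refine (intervalIntegrable_const (c := M)).mono_fun (hΦmeas u v) ?_
    filter_upwards with x
    rw [Real.norm_eq_abs, abs_of_nonneg hM]
    exact hΦnorm x
  -- the integrands agree a.e.
  have hZsub : ({x | x ∈ Icc a b ∧ F' x = 0} : Set ℝ).Subsingleton := by
    intro x hx y hy
    by_contra hne
    rcases lt_or_gt_of_ne hne with hlt | hlt
    · have h1 := hgrow x hx.1 y hy.1 hlt.le
      rw [hx.2, hy.2] at h1
      nlinarith
    · have h1 := hgrow y hy.1 x hx.1 hlt.le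
      rw [hx.2, hy.2] at h1
      nlinarith
  have hIcongr : (∫ x in a..b, (G x : ℂ) * Complex.exp (Complex.I * (F x : ℂ)))
      = ∫ x in a..b, Φ x := by
    apply intervalIntegral.integral_congr_ae
    have h0 : ∀ᵐ x ∂(volume : Measure ℝ), ¬(x ∈ Icc a b ∧ F' x = 0) := by
      rw [ae_iff]
      simp only [not_not]
      exact hZsub.measure_zero (volume : Measure ℝ)
    filter_upwards [h0] with x hx hxu
    have hxmem : x ∈ Icc a b := by
      rw [uIoc_of_le hab] at hxu
      exact ⟨hxu.1.le, hxu.2⟩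
    have hF'ne : F' x ≠ 0 := fun h => hx ⟨hxmem, h⟩
    rw [hΦdef]
    dsimp only
    rw [hclid x hxmem, ← Complex.ofReal_mul, div_mul_cancel₀ _ hF'ne]
  have hsplit : (∫ x in a..b, Φ x)
      = (∫ x in a..p, Φ x) + (∫ x in p..q, Φ x) + ∫ x in q..b, Φ x := by
    have h1 := intervalIntegral.integral_add_adjacent_intervals (hΦint a p) (hΦint p b)
    have h2 := intervalIntegral.integral_add_adjacent_intervals (hΦint p q) (hΦint q b)
    rw [← h1, ← h2]
    ring
  have hmid : ‖∫ x in p..q, Φ x‖ ≤ M * (2 * δ) := by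
    refine (intervalIntegral.norm_integral_le_of_norm_le_const (fun x _ => hΦnorm x)).trans ?_
    rw [abs_of_nonneg (by linarith : (0:ℝ) ≤ q - p)]
    exact mul_le_mul_of_nonneg_left hqp hM
  have hright : ‖∫ x in q..b, Φ x‖ ≤ 4 * K := by
    rcases eq_or_lt_of_le hqb with heq | hlt
    · rw [heq, intervalIntegral.integral_same, norm_zero]
      positivity
    · have hqeq : q = x₀ + δ := by
        rcases min_cases b (x₀ + δ) with ⟨h1, h2⟩ | ⟨h1, h2⟩
        · exfalso
          have : q = b := hqdef.trans h1
          linarith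
        · exact hqdef.trans h1
      have hqlow : ∀ x ∈ Icc q b, r * δ ≤ F' x := by
        intro x hx
        exact hpos x ⟨haq.trans hx.1, hx.2⟩ (by rw [← hqeq]; exact hx.1)
      set cl2 : ℝ → ℝ := fun x => max q (min x b) with hcl2
      have hcl2mono : Monotone cl2 := fun x y hxy => max_le_max le_rfl (min_le_min hxy le_rfl)
      have hcl2mem : ∀ x, cl2 x ∈ Icc q b :=
        fun x => ⟨le_max_left _ _, max_le hqb (min_le_right _ _)⟩
      have hcl2id : ∀ x ∈ Icc q b, cl2 x = x := by
        intro x hx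
        rw [hcl2]
        dsimp only
        rw [min_eq_left hx.2, max_eq_right hx.1]
      have hcl2ab : ∀ x, cl2 x ∈ Icc a b := fun x => ⟨haq.trans (hcl2mem x).1, (hcl2mem x).2⟩
      have hmono2 : Monotone (fun x => G (cl2 x) / F' (cl2 x)) :=
        fun x y hxy => hmono (hcl2ab x) (hcl2ab y) (hcl2mono hxy)
      have hKb : ∀ x, |G (cl2 x) / F' (cl2 x)| ≤ K := by
        intro x
        have hbig := hqlow _ (hcl2mem x)
        rw [abs_div, hKdef]
        apply div_le_div₀ hM (hG _ (hcl2ab x)) hrδpos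
        rw [abs_of_nonneg (le_trans hrδpos.le hbig)]
        exact hbig
      have hder2 : ∀ x ∈ Ioo q b, HasDerivAt (F ∘ cl) ((F' ∘ cl) x) x := by
        intro x hx
        have hxab : x ∈ Ioo a b := ⟨lt_of_le_of_lt haq hx.1, hx.2⟩
        have hxm : x ∈ Icc a b := ⟨hxab.1.le, hxab.2.le⟩
        have hev : (F ∘ cl) =ᶠ[nhds x] F := by
          filter_upwards [Ioo_mem_nhds hxab.1 hxab.2] with y hy
          exact congrArg F (hclid y ⟨hy.1.le, hy.2.le⟩)
        have hda : HasDerivAt (F ∘ cl) (F' x) x :=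
          (hderiv x hxm).congr_of_eventuallyEq hev
        rw [Function.comp_apply, hclid x hxm]
        exact hda
      have hkey := vdc_key q b K hqb (F ∘ cl) (F' ∘ cl) hFc hF'c hder2 _ hmono2 hKb
      refine le_trans (le_of_eq (congrArg norm ?_)) hkey
      apply intervalIntegral.integral_congr
      intro x hx
      rw [uIcc_of_le hqb] at hx
      have hxab : x ∈ Icc a b := ⟨haq.trans hx.1, hx.2⟩
      rw [hΦdef]
      dsimp only [Function.comp_apply]
      rw [hclid x hxab, hcl2id x hx]
  have hleft : ‖∫ x in a..p, Φ x‖ ≤ 4 * K := by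
    rcases eq_or_lt_of_le hap with heq | hlt
    · rw [← heq, intervalIntegral.integral_same, norm_zero]
      positivity
    · have hpeq : p = x₀ - δ := by
        rcases max_cases a (x₀ - δ) with ⟨h1, h2⟩ | ⟨h1, h2⟩
        · exfalso
          have : p = a := hpdef.trans h1
          linarith
        · exact hpdef.trans h1
      have hphigh : ∀ x ∈ Icc a p, F' x ≤ -(r * δ) := by
        intro x hx
        exact hneg x ⟨hx.1, hx.2.trans hpb⟩ (by rw [← hpeq]; exact hx.2)
      set cl3 : ℝ → ℝ := fun x => max a (min x p) with hcl3
      have hcl3mono : Monotone cl3 := fun x y hxy => max_le_max le_rfl (min_le_min hxy le_rfl)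
      have hcl3mem : ∀ x, cl3 x ∈ Icc a p :=
        fun x => ⟨le_max_left _ _, max_le hap (min_le_right _ _)⟩
      have hcl3id : ∀ x ∈ Icc a p, cl3 x = x := by
        intro x hx
        rw [hcl3]
        dsimp only
        rw [min_eq_left hx.2, max_eq_right hx.1]
      have hcl3ab : ∀ x, cl3 x ∈ Icc a b := fun x => ⟨(hcl3mem x).1, (hcl3mem x).2.trans hpb⟩
      have hmono3 : Monotone (fun x => G (cl3 x) / F' (cl3 x)) :=
        fun x y hxy => hmono (hcl3ab x) (hcl3ab y) (hcl3mono hxy)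
      have hKb3 : ∀ x, |G (cl3 x) / F' (cl3 x)| ≤ K := by
        intro x
        have hbig := hphigh _ (hcl3mem x)
        rw [abs_div, hKdef]
        apply div_le_div₀ hM (hG _ (hcl3ab x)) hrδpos
        rw [abs_of_nonpos (by linarith)]
        linarith
      have hder3 : ∀ x ∈ Ioo a p, HasDerivAt (F ∘ cl) ((F' ∘ cl) x) x := by
        intro x hx
        have hxab : x ∈ Ioo a b := ⟨hx.1, lt_of_lt_of_le hx.2 hpb⟩
        have hxm : x ∈ Icc a b := ⟨hxab.1.le, hxab.2.le⟩
        have hev : (F ∘ cl) =ᶠ[nhds x] F := by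
          filter_upwards [Ioo_mem_nhds hxab.1 hxab.2] with y hy
          exact congrArg F (hclid y ⟨hy.1.le, hy.2.le⟩)
        have hda : HasDerivAt (F ∘ cl) (F' x) x :=
          (hderiv x hxm).congr_of_eventuallyEq hev
        rw [Function.comp_apply, hclid x hxm]
        exact hda
      have hkey := vdc_key a p K hap (F ∘ cl) (F' ∘ cl) hFc hF'c hder3 _ hmono3 hKb3
      refine le_trans (le_of_eq (congrArg norm ?_)) hkey
      apply intervalIntegral.integral_congr
      intro x hx
      rw [uIcc_of_le hap] at hx
      have hxab : x ∈ Icc a b := ⟨hx.1, hx.2.trans hpb⟩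
      rw [hΦdef]
      dsimp only [Function.comp_apply]
      rw [hclid x hxab, hcl3id x hx]
  rw [hIcongr, hsplit]
  have hne : Real.sqrt r ≠ 0 := ne_of_gt hsr
  calc ‖(∫ x in a..p, Φ x) + (∫ x in p..q, Φ x) + ∫ x in q..b, Φ x‖
      ≤ ‖∫ x in a..p, Φ x‖ + ‖∫ x in p..q, Φ x‖ + ‖∫ x in q..b, Φ x‖ := norm_add₃_le
    _ ≤ 4 * K + M * (2 * δ) + 4 * K := add_le_add (add_le_add hleft hmid) hright
    _ = 8 * M / Real.sqrt r := by
        rw [hKdef, hrδ, hδdef]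
        field_simp
        ring

theorem second_derivative_test_exponential_integral
    (a b r M : ℝ) (hab : a ≤ b) (hr : 0 < r) (F F' F'' G : ℝ → ℝ)
    (hderiv : ∀ x ∈ Icc a b, HasDerivAt F (F' x) x)
    (hderiv' : ∀ x ∈ Icc a b, HasDerivAt F' (F'' x) x)
    (hbound : (∀ x ∈ Icc a b, r ≤ F'' x) ∨ (∀ x ∈ Icc a b, F'' x ≤ -r))
    (hG : ∀ x ∈ Icc a b, |G x| ≤ M)
    (hmono : MonotoneOn (fun x => G x / F' x) (Icc a b) ∨
      AntitoneOn (fun x => G x / F' x) (Icc a b)) :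
    ‖∫ x in a..b, (G x : ℂ) * Complex.exp (Complex.I * (F x : ℂ))‖ ≤
      8 * M / Real.sqrt r := by
  have hGneg : ∀ x ∈ Icc a b, |(fun y => -G y) x| ≤ M := fun x hx => by
    simpa [abs_neg] using hG x hx
  have hnegint : ∀ (H : ℝ → ℝ), (∫ x in a..b, ((-G x : ℝ) : ℂ)
        * Complex.exp (Complex.I * ((H x : ℝ) : ℂ)))
      = -∫ x in a..b, (G x : ℂ) * Complex.exp (Complex.I * ((H x : ℝ) : ℂ)) := by
    intro H
    rw [← intervalIntegral.integral_neg]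
    apply intervalIntegral.integral_congr
    intro x _
    push_cast
    ring
  have hnorm_eq : ‖∫ x in a..b, (G x : ℂ) * Complex.exp (Complex.I * (F x : ℂ))‖
      = ‖∫ x in a..b, (G x : ℂ) * Complex.exp (Complex.I * ((-F x : ℝ) : ℂ))‖ := by
    have hc : (∫ x in a..b, (G x : ℂ) * Complex.exp (Complex.I * ((-F x : ℝ) : ℂ)))
        = (starRingEnd ℂ) (∫ x in a..b, (G x : ℂ) * Complex.exp (Complex.I * (F x : ℂ))) := by
      rw [intervalIntegral.integral_of_le hab, intervalIntegral.integral_of_le hab,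
        ← integral_conj]
      apply integral_congr_ae
      filter_upwards with x
      rw [map_mul, Complex.conj_ofReal, ← Complex.exp_conj, map_mul, Complex.conj_I,
        Complex.conj_ofReal]
      push_cast
      ring_nf
    rw [hc, RCLike.norm_conj]
  rcases hbound with hb1 | hb2
  · rcases hmono with hm1 | hm2
    · exact vdc_core a b r M hab hr F F' F'' G hderiv hderiv' hb1 hG hm1
    · have hm : MonotoneOn (fun x => (-G x) / F' x) (Icc a b) := by
        intro x hx y hy hxy
        simp only [neg_div]
        exact neg_le_neg (hm2 hx hy hxy)
      have h1 := vdc_core a b r M hab hr F F' F'' (fun y => -G y) hderiv hderiv' hb1 hGneg hm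
      rw [hnegint F, norm_neg] at h1
      exact h1
  · have hderivN : ∀ x ∈ Icc a b, HasDerivAt (fun y => -F y) ((fun y => -F' y) x) x :=
      fun x hx => (hderiv x hx).neg
    have hderiv'N : ∀ x ∈ Icc a b, HasDerivAt (fun y => -F' y) ((fun y => -F'' y) x) x :=
      fun x hx => (hderiv' x hx).neg
    have hbN : ∀ x ∈ Icc a b, r ≤ (fun y => -F'' y) x := fun x hx => by
      have := hb2 x hx
      simp only
      linarith
    rw [hnorm_eq]
    rcases hmono with hm1 | hm2
    · have hm : MonotoneOn (fun x => (-G x) / (-F' x)) (Icc a b) := by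
        intro x hx y hy hxy
        simp only [neg_div_neg_eq]
        exact hm1 hx hy hxy
      have h1 := vdc_core a b r M hab hr (fun y => -F y) (fun y => -F' y) (fun y => -F'' y)
        (fun y => -G y) hderivN hderiv'N hbN hGneg hm
      rw [hnegint (fun y => -F y), norm_neg] at h1
      exact h1
    · have hm : MonotoneOn (fun x => G x / (-F' x)) (Icc a b) := by
        intro x hx y hy hxy
        simp only [div_neg]
        exact neg_le_neg (hm2 hx hy hxy)
      exact vdc_core a b r M hab hr (fun y => -F y) (fun y => -F' y) (fun y => -F'' y)
        G hderivN hderiv'N hbN hG hm
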